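/- For every L > 0, every n ∈ ℕ, and all real a, b ≥ 0, the Lebesgue measure of the n-iterate Cantor set satisfies |C_n(L) ∩ [0, a+b]| ≤ |C_n(L) ∩ [0, a]| + |C_n(L) ∩ [0, b]|; equivalently, the n-iterate Cantor function 𝒢_{L,n}(x) = |C_n(L) ∩ [0,x]| / |C_n(L)| (extended by 0 for x ≤ 0) is subadditive on ℝ. -/

import Mathlib

open Real MeasureTheory
open Pointwise

/-- The `n`-iterate mid-third Cantor set based in `[0, L]`:
`C₀(L) = [0,L]` and `C_{n+1}(L) = (1/3)·C_n(L) ∪ (2L/3 + (1/3)·C_n(L))`. -/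
def cantorIterate : ℕ → ℝ → Set ℝ
  | 0, L => Set.Icc 0 L
  | n + 1, L =>
      (fun x => x / 3) '' cantorIterate n L ∪
        (fun x => 2 * L / 3 + x / 3) '' cantorIterate n L

lemma cantor_subset (n : ℕ) (L : ℝ) (hL : 0 ≤ L) : cantorIterate n L ⊆ Set.Icc 0 L := by
  induction n with
  | zero => exact fun x hx => hx
  | succ n ih =>
    rintro x (⟨y, hy, rfl⟩ | ⟨y, hy, rfl⟩) <;> obtain ⟨h0, h1⟩ := ih hy <;>
      constructor <;> simp only <;> linarith

lemma cantor_compact (n : ℕ) (L : ℝ) : IsCompact (cantorIterate n L) := by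
  induction n with
  | zero => exact isCompact_Icc
  | succ n ih =>
    exact (ih.image (by continuity)).union (ih.image (by continuity))

lemma cantor_measurable (n : ℕ) (L : ℝ) : MeasurableSet (cantorIterate n L) :=
  (cantor_compact n L).measurableSet

lemma vol_affine_image (c : ℝ) (S : Set ℝ) :
    volume ((fun x => c + x / 3) '' S) = ENNReal.ofReal 3⁻¹ * volume S := by
  have h1 : (fun x : ℝ => c + x / 3) '' S = (fun x : ℝ => c + x) '' ((3:ℝ)⁻¹ • S) := by
    rw [← Set.image_smul, Set.image_image]
    exact (Set.image_congr' (fun x : ℝ => by show c + (3:ℝ)⁻¹ • x = c + x/3; rw [smul_eq_mul]; ring)).symm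
  rw [h1, Set.image_add_left, measure_preimage_add,
    Measure.addHaar_smul]
  norm_num [abs_of_nonneg]

lemma vol_piece (c : ℝ) (S : Set ℝ) (u v : ℝ) :
    volume ((fun x => c + x / 3) '' S ∩ Set.Icc u v)
      = ENNReal.ofReal 3⁻¹ * volume (S ∩ Set.Icc (3 * (u - c)) (3 * (v - c))) := by
  rw [← Set.image_inter_preimage]
  have h : (fun x : ℝ => c + x / 3) ⁻¹' Set.Icc u v = Set.Icc (3 * (u - c)) (3 * (v - c)) := by
    ext x
    simp only [Set.mem_preimage, Set.mem_Icc]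
    constructor <;> rintro ⟨h1, h2⟩ <;> constructor <;> linarith
  rw [h, vol_affine_image]

lemma vol_succ (L : ℝ) (hL : 0 < L) (n : ℕ) (u v : ℝ) :
    volume (cantorIterate (n + 1) L ∩ Set.Icc u v)
      = ENNReal.ofReal 3⁻¹ * volume (cantorIterate n L ∩ Set.Icc (3 * (u - 0)) (3 * (v - 0)))
        + ENNReal.ofReal 3⁻¹ *
          volume (cantorIterate n L ∩
            Set.Icc (3 * (u - 2 * L / 3)) (3 * (v - 2 * L / 3))) := by
  have hC := cantor_subset n L hL.le
  have e0 : (fun x : ℝ => x / 3) '' cantorIterate n L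
      = (fun x : ℝ => 0 + x / 3) '' cantorIterate n L :=
    Set.image_congr' (fun x => by ring)
  have hdis : Disjoint ((fun x : ℝ => x / 3) '' cantorIterate n L ∩ Set.Icc u v)
      ((fun x : ℝ => 2 * L / 3 + x / 3) '' cantorIterate n L ∩ Set.Icc u v) := by
    rw [Set.disjoint_left]
    rintro x ⟨⟨y, hy, rfl⟩, -⟩ ⟨⟨z, hz, hzx⟩, -⟩
    have h1 := (hC hy).2
    have h2 := (hC hz).1
    simp only at hzx
    linarith
  have hmeas : MeasurableSet
      ((fun x : ℝ => 2 * L / 3 + x / 3) '' cantorIterate n L ∩ Set.Icc u v) :=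
    (((cantor_compact n L).image (by continuity)).measurableSet).inter measurableSet_Icc
  show volume ((_ ∪ _) ∩ _) = _
  rw [Set.union_inter_distrib_right, measure_union hdis hmeas, e0, vol_piece, vol_piece]

lemma cantor_inter_neg (n : ℕ) (L : ℝ) (hL : 0 ≤ L) {u v : ℝ} (hu : u ≤ 0) :
    cantorIterate n L ∩ Set.Icc u v = cantorIterate n L ∩ Set.Icc 0 v := by
  ext x
  simp only [Set.mem_inter_iff, Set.mem_Icc]
  exact ⟨fun ⟨h, h1, h2⟩ => ⟨h, (cantor_subset n L hL h).1, h2⟩,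
    fun ⟨h, h1, h2⟩ => ⟨h, le_trans hu h1, h2⟩⟩

lemma cantor_inter_full (n : ℕ) (L : ℝ) (hL : 0 ≤ L) {t : ℝ} (ht : L ≤ t) :
    cantorIterate n L ∩ Set.Icc 0 t = cantorIterate n L :=
  Set.inter_eq_left.mpr fun x hx =>
    ⟨(cantor_subset n L hL hx).1, le_trans (cantor_subset n L hL hx).2 ht⟩

lemma cantor_vol_nonpos (n : ℕ) (L : ℝ) (hL : 0 ≤ L) {u v : ℝ} (hv : v ≤ 0) :
    volume (cantorIterate n L ∩ Set.Icc u v) = 0 := by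
  have hsub : cantorIterate n L ∩ Set.Icc u v ⊆ {0} := by
    rintro x ⟨hx, hI⟩
    have h0 := (cantor_subset n L hL hx).1
    have h2 := hI.2
    show x = 0
    linarith
  exact le_antisymm (le_trans (measure_mono hsub) (by simp)) zero_le

lemma cantor_vol_high (n : ℕ) (L : ℝ) (hL : 0 ≤ L) {u v : ℝ} (hu : L ≤ u) :
    volume (cantorIterate n L ∩ Set.Icc u v) = 0 := by
  have hsub : cantorIterate n L ∩ Set.Icc u v ⊆ {L} := by
    rintro x ⟨hx, hI⟩
    have h0 := (cantor_subset n L hL hx).2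
    have h1 := hI.1
    show x = L
    linarith
  exact le_antisymm (le_trans (measure_mono hsub) (by simp)) zero_le

lemma cantor_vol_mono (n : ℕ) (L : ℝ) {s t : ℝ} (h : s ≤ t) :
    volume (cantorIterate n L ∩ Set.Icc 0 s)
      ≤ volume (cantorIterate n L ∩ Set.Icc 0 t) :=
  measure_mono (Set.inter_subset_inter_right _ (Set.Icc_subset_Icc le_rfl h))

lemma cantor_translate (L : ℝ) (hL : 0 < L) (n : ℕ) (u v : ℝ) :
    volume (cantorIterate n L ∩ Set.Icc u v)
      ≤ volume (cantorIterate n L ∩ Set.Icc 0 (v - u)) := by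
  induction n generalizing u v with
  | zero =>
    rcases le_or_gt u v with huv | huv
    · show volume (Set.Icc 0 L ∩ _) ≤ volume (Set.Icc 0 L ∩ _)
      rw [Set.Icc_inter_Icc, Set.Icc_inter_Icc, Real.volume_Icc, Real.volume_Icc]
      apply ENNReal.ofReal_le_ofReal
      have h1 : L ⊓ v ≤ L := inf_le_left
      have h2 : L ⊓ v ≤ v := inf_le_right
      have h3 : (0:ℝ) ≤ 0 ⊔ u := le_sup_left
      have h4 : u ≤ 0 ⊔ u := le_sup_right
      rw [sup_idem, sub_zero]
      exact le_inf (by linarith) (by linarith)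
    · rw [Set.Icc_eq_empty (not_le.mpr huv), Set.inter_empty]
      simp
  | succ n ih =>
    rcases le_or_gt u v with huv | huv
    swap
    · rw [Set.Icc_eq_empty (not_le.mpr huv), Set.inter_empty]
      simp
    rcases le_or_gt u 0 with hu | hu
    · rw [cantor_inter_neg (n+1) L hL.le hu]
      exact cantor_vol_mono (n+1) L (by linarith)
    rw [vol_succ L hL, vol_succ L hL]
    rw [show (3:ℝ) * (u - 0) = 3 * u by ring, show (3:ℝ) * (v - 0) = 3 * v by ring,
      show (3:ℝ) * (u - 2 * L / 3) = 3 * u - 2 * L by ring,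
      show (3:ℝ) * (v - 2 * L / 3) = 3 * v - 2 * L by ring,
      show (3:ℝ) * ((0:ℝ) - 0) = 0 by ring,
      show (3:ℝ) * ((v - u) - 0) = 3 * (v - u) by ring,
      show (3:ℝ) * ((0:ℝ) - 2 * L / 3) = 0 - 2 * L by ring,
      show (3:ℝ) * ((v - u) - 2 * L / 3) = 3 * (v - u) - 2 * L by ring]
    rw [cantor_inter_neg n L hL.le (show (0:ℝ) - 2 * L ≤ 0 by linarith)]
    set q : ENNReal := ENNReal.ofReal 3⁻¹ with hq
    rcases le_or_gt (3 * v - 2 * L) 0 with h2 | h2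
    · rw [cantor_vol_nonpos n L hL.le (show (3:ℝ) * v - 2 * L ≤ 0 from h2), mul_zero, add_zero]
      have h := ih (3 * u) (3 * v)
      rw [show (3:ℝ) * v - 3 * u = 3 * (v - u) by ring] at h
      exact le_trans (mul_le_mul' le_rfl h) le_self_add
    rcases le_or_gt L (3 * u) with h3 | h3
    · rw [cantor_vol_high n L hL.le h3, mul_zero, zero_add]
      have h := ih (3 * u - 2 * L) (3 * v - 2 * L)
      rw [show (3:ℝ) * v - 2 * L - (3 * u - 2 * L) = 3 * (v - u) by ring] at h
      exact le_trans (mul_le_mul' le_rfl h) le_self_add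
    -- main case: 0 < u, 3u < L, 3v > 2L
    rw [cantor_inter_neg n L hL.le (show (3:ℝ) * u - 2 * L ≤ 0 by linarith)]
    have hsub : volume (cantorIterate n L ∩ Set.Icc 0 (3 * v - 2 * L))
        ≤ volume (cantorIterate n L ∩ Set.Icc 0 (3 * u))
          + volume (cantorIterate n L ∩ Set.Icc 0 (3 * (v - u) - 2 * L)) := by
      rcases le_or_gt (3 * v - 2 * L) (3 * u) with h | h
      · exact le_trans (cantor_vol_mono n L h) le_self_add
      · have hspl : cantorIterate n L ∩ Set.Icc 0 (3 * v - 2 * L)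
            ⊆ (cantorIterate n L ∩ Set.Icc 0 (3 * u))
              ∪ (cantorIterate n L ∩ Set.Icc (3 * u) (3 * v - 2 * L)) := by
          rw [← Set.inter_union_distrib_left,
            Set.Icc_union_Icc_eq_Icc (by linarith) h.le]
        refine le_trans (measure_mono hspl) (le_trans (measure_union_le _ _)
          (add_le_add le_rfl ?_))
        have h' := ih (3 * u) (3 * v - 2 * L)
        rwa [show (3:ℝ) * v - 2 * L - 3 * u = 3 * (v - u) - 2 * L by ring] at h'
    have hmeas : MeasurableSet (cantorIterate n L ∩ Set.Icc (3 * u) (3 * v)) :=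
      (cantor_measurable n L).inter measurableSet_Icc
    have hsplit := measure_union_add_inter (μ := volume)
      (cantorIterate n L ∩ Set.Icc 0 (3 * u)) hmeas
    have e1 : (cantorIterate n L ∩ Set.Icc 0 (3 * u))
        ∪ (cantorIterate n L ∩ Set.Icc (3 * u) (3 * v))
        = cantorIterate n L ∩ Set.Icc 0 (3 * v) := by
      rw [← Set.inter_union_distrib_left,
        Set.Icc_union_Icc_eq_Icc (by linarith) (by linarith)]
    have e2 : volume ((cantorIterate n L ∩ Set.Icc 0 (3 * u))
        ∩ (cantorIterate n L ∩ Set.Icc (3 * u) (3 * v))) = 0 := by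
      refine le_antisymm (le_trans (measure_mono ?_)
        (le_of_eq (Real.volume_singleton (a := 3 * u)))) zero_le
      rintro x ⟨⟨-, hI1⟩, -, hI2⟩
      exact le_antisymm hI1.2 hI2.1
    rw [e1, e2, add_zero] at hsplit
    have hf1 : cantorIterate n L ∩ Set.Icc 0 (3 * v) = cantorIterate n L :=
      cantor_inter_full n L hL.le (by linarith)
    have hf2 : cantorIterate n L ∩ Set.Icc 0 (3 * (v - u)) = cantorIterate n L :=
      cantor_inter_full n L hL.le (by linarith)
    have key : volume (cantorIterate n L ∩ Set.Icc 0 (3 * u))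
        + volume (cantorIterate n L ∩ Set.Icc (3 * u) (3 * v))
        = volume (cantorIterate n L ∩ Set.Icc 0 (3 * (v - u))) := by
      rw [← hsplit, hf1, hf2]
    calc q * volume (cantorIterate n L ∩ Set.Icc (3 * u) (3 * v))
          + q * volume (cantorIterate n L ∩ Set.Icc 0 (3 * v - 2 * L))
        ≤ q * volume (cantorIterate n L ∩ Set.Icc (3 * u) (3 * v))
          + q * (volume (cantorIterate n L ∩ Set.Icc 0 (3 * u))
            + volume (cantorIterate n L ∩ Set.Icc 0 (3 * (v - u) - 2 * L))) :=
        add_le_add le_rfl (mul_le_mul' le_rfl hsub)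
      _ = q * (volume (cantorIterate n L ∩ Set.Icc 0 (3 * u))
            + volume (cantorIterate n L ∩ Set.Icc (3 * u) (3 * v)))
          + q * volume (cantorIterate n L ∩ Set.Icc 0 (3 * (v - u) - 2 * L)) := by
        ring
      _ = q * volume (cantorIterate n L ∩ Set.Icc 0 (3 * (v - u)))
          + q * volume (cantorIterate n L ∩ Set.Icc 0 (3 * (v - u) - 2 * L)) := by
        rw [key]

/-- Subadditivity of the `n`-iterate Cantor function: for all `a, b ≥ 0`,
`|C_n(L) ∩ [0, a+b]| ≤ |C_n(L) ∩ [0, a]| + |C_n(L) ∩ [0, b]|`. -/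
theorem cantor_measure_subadditive (L : ℝ) (hL : 0 < L) (n : ℕ)
    (a b : ℝ) (ha : 0 ≤ a) (hb : 0 ≤ b) :
    volume (cantorIterate n L ∩ Set.Icc 0 (a + b)) ≤
      volume (cantorIterate n L ∩ Set.Icc 0 a) +
        volume (cantorIterate n L ∩ Set.Icc 0 b) := by
  have hsplit : cantorIterate n L ∩ Set.Icc 0 (a + b)
      ⊆ (cantorIterate n L ∩ Set.Icc 0 a) ∪ (cantorIterate n L ∩ Set.Icc a (a + b)) := by
    rw [← Set.inter_union_distrib_left, Set.Icc_union_Icc_eq_Icc ha (by linarith)]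
  refine le_trans (measure_mono hsplit)
    (le_trans (measure_union_le _ _) (add_le_add le_rfl ?_))
  have h := cantor_translate L hL n a (a + b)
  rwa [add_sub_cancel_left] at h
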